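/- For every graph H with at least one edge and every positive integer n, IR(H, K_{1,n}) ≥ n·(χ(H) − 1) + 1, where χ(H) is the chromatic number of H. -/

import Mathlib

open SimpleGraph

def ArrowsInd {V α β : Type*} (F : SimpleGraph V) (H : SimpleGraph α) (G : SimpleGraph β) : Prop :=
  ∀ c : Sym2 V → Bool,
    (∃ f : H ↪g F, ∀ u v, H.Adj u v → c s(f u, f v) = true) ∨
    (∃ g : G ↪g F, ∀ u v, G.Adj u v → c s(g u, g v) = false)

noncomputable def IR {α β : Type*} (H : SimpleGraph α) (G : SimpleGraph β) : ℕ :=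
  sInf {N : ℕ | ∃ F : SimpleGraph (Fin N), ArrowsInd F H G}

def StarGraph (n : ℕ) : SimpleGraph (Fin 1 ⊕ Fin n) := completeBipartiteGraph (Fin 1) (Fin n)

lemma arrowsInd_iso {V W α β : Type*} {F : SimpleGraph V} {F' : SimpleGraph W}
    {H : SimpleGraph α} {G : SimpleGraph β} (e : F ≃g F') (h : ArrowsInd F H G) :
    ArrowsInd F' H G := by
  intro c
  rcases h (fun s => c (s.map e)) with ⟨f, hf⟩ | ⟨g, hg⟩
  · refine Or.inl ⟨e.toEmbedding.comp f, fun u v huv => ?_⟩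
    have := hf u v huv
    simpa using this
  · refine Or.inr ⟨e.toEmbedding.comp g, fun u v huv => ?_⟩
    have := hg u v huv
    simpa using this

/-- The blow-up of `H` with independent classes of size `k*n` arrows `(H, K_{1,n})`. -/
lemma blowup_arrows (k n : ℕ) (hk : 0 < k) (hn : 0 < n) (H : SimpleGraph (Fin k)) :
    ArrowsInd (SimpleGraph.comap Prod.fst H : SimpleGraph (Fin k × Fin (k * n))) H
      (StarGraph n) := by
  classical
  set m := k * n with hm
  have hm0 : 0 < m := Nat.mul_pos hk hn
  intro c
  set F' : SimpleGraph (Fin k × Fin m) := SimpleGraph.comap Prod.fst H with hF'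
  by_cases hblue : ∃ g : StarGraph n ↪g F', ∀ u v, (StarGraph n).Adj u v →
      c s(g u, g v) = false
  · exact Or.inr hblue
  -- key: every vertex has fewer than n "blue" partners in each adjacent class
  have key : ∀ (w : Fin k × Fin m) (a : Fin k), H.Adj w.1 a →
      (Finset.univ.filter (fun j : Fin m => c s(w, (a, j)) = false)).card < n := by
    intro w a hadj
    by_contra hcard
    push_neg at hcard
    set B := Finset.univ.filter (fun j : Fin m => c s(w, (a, j)) = false) with hB
    have hcard' : n ≤ B.card := hcard
    have hane : w.1 ≠ a := H.ne_of_adj hadj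
    let e := B.orderEmbOfCardLe hcard'
    have hemem : ∀ t : Fin n, c s(w, (a, e t)) = false := by
      intro t
      have := B.orderEmbOfCardLe_mem hcard' t
      simpa [hB] using this
    refine hblue ⟨⟨⟨Sum.elim (fun _ => w) (fun t => (a, e t)), ?_⟩, ?_⟩, ?_⟩
    · rintro (x | x) (y | y) hxy
      · simp [Subsingleton.elim x y]
      · exact absurd (congrArg Prod.fst hxy) hane
      · exact absurd (congrArg Prod.fst hxy).symm hane
      · simp only [Sum.elim_inr, Prod.mk.injEq] at hxy
        exact congrArg Sum.inr (e.injective hxy.2)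
    · rintro (x | x) (y | y) <;>
        show H.Adj (Sum.elim (fun _ => w) (fun t => (a, e t)) _).1
          (Sum.elim (fun _ => w) (fun t => (a, e t)) _).1 ↔ (StarGraph n).Adj _ _ <;>
        simp [StarGraph, F', hadj, hadj.symm, H.irrefl, Sum.elim_inl, Sum.elim_inr]
    · rintro (x | x) (y | y) hxy
      · simp [StarGraph] at hxy
      · exact hemem y
      · rw [Sym2.eq_swap]; exact hemem x
      · simp [StarGraph] at hxy
  -- greedy choice of a red transversal
  have grd : ∀ s : Finset (Fin k), ∃ p : Fin k → Fin m,
      ∀ u ∈ s, ∀ v ∈ s, H.Adj u v → c s((u, p u), (v, p v)) = true := by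
    intro s
    induction s using Finset.induction_on with
    | empty => exact ⟨fun _ => ⟨0, hm0⟩, by simp⟩
    | @insert a s ha ih =>
      obtain ⟨p, hp⟩ := ih
      set bad : Finset (Fin m) := (s.filter (fun u => H.Adj u a)).biUnion
        (fun u => Finset.univ.filter (fun j : Fin m => c s((u, p u), (a, j)) = false)) with hbad
      have hbadcard : bad.card < m := by
        have h1 : bad.card ≤ (s.filter (fun u => H.Adj u a)).card * (n - 1) := by
          refine Finset.card_biUnion_le_card_mul _ _ _ ?_
          intro u hu
          have hadj : H.Adj u a := (Finset.mem_filter.mp hu).2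
          have := key (u, p u) a hadj
          omega
        have h2 : (s.filter (fun u => H.Adj u a)).card ≤ k - 1 := by
          have hsub : s.filter (fun u => H.Adj u a) ⊆ Finset.univ.erase a := by
            intro u hu
            refine Finset.mem_erase.mpr ⟨?_, Finset.mem_univ u⟩
            exact H.ne_of_adj (Finset.mem_filter.mp hu).2
          have := Finset.card_le_card hsub
          simpa [Finset.card_erase_of_mem] using this
        have h3 : (k - 1) * (n - 1) < k * n := by
          obtain ⟨k', rfl⟩ : ∃ k', k = k' + 1 := ⟨k - 1, by omega⟩
          obtain ⟨n', rfl⟩ : ∃ n', n = n' + 1 := ⟨n - 1, by omega⟩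
          simp only [Nat.add_sub_cancel]
          nlinarith
        calc bad.card ≤ (s.filter (fun u => H.Adj u a)).card * (n - 1) := h1
          _ ≤ (k - 1) * (n - 1) := Nat.mul_le_mul_right _ h2
          _ < k * n := h3
      have hex : ∃ j : Fin m, j ∉ bad := by
        by_contra hall
        push_neg at hall
        have : bad = Finset.univ := Finset.eq_univ_iff_forall.mpr hall
        rw [this] at hbadcard
        simp at hbadcard
      obtain ⟨j, hj⟩ := hex
      refine ⟨Function.update p a j, ?_⟩
      have hkey : ∀ v ∈ s, H.Adj v a → c s((v, p v), (a, j)) = true := by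
        intro v hv hadj
        by_contra hc
        have hcf : c s((v, p v), (a, j)) = false := by
          cases hb : c s((v, p v), (a, j)) <;> simp_all
        exact hj (Finset.mem_biUnion.mpr ⟨v, Finset.mem_filter.mpr ⟨hv, hadj⟩,
          Finset.mem_filter.mpr ⟨Finset.mem_univ j, hcf⟩⟩)
      intro u hu v hv hadj
      rcases Finset.mem_insert.mp hu with rfl | hu' <;>
        rcases Finset.mem_insert.mp hv with h | hv'
      · exact absurd (h ▸ hadj) (H.irrefl)
      · have hvne : v ≠ u := fun h => ha (h ▸ hv')
        rw [Function.update_self, Function.update_of_ne hvne]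
        rw [Sym2.eq_swap]
        exact hkey v hv' hadj.symm
      · subst h
        have hune : u ≠ v := fun h => ha (h ▸ hu')
        rw [Function.update_self, Function.update_of_ne hune]
        exact hkey u hu' hadj
      · have hune : u ≠ a := fun h => ha (h ▸ hu')
        have hvne : v ≠ a := fun h => ha (h ▸ hv')
        rw [Function.update_of_ne hune, Function.update_of_ne hvne]
        exact hp u hu' v hv' hadj
  obtain ⟨p, hp⟩ := grd Finset.univ
  refine Or.inl ⟨⟨⟨fun u => (u, p u), fun u v h => congrArg Prod.fst h⟩, Iff.rfl⟩, ?_⟩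
  intro u v hadj
  exact hp u (Finset.mem_univ u) v (Finset.mem_univ v) hadj

/-- IR(H, K_{1,n}) ≥ n·(χ(H) − 1) + 1 for H with at least one edge. -/
theorem IR_lower_chromatic (k : ℕ) (H : SimpleGraph (Fin k)) (hedge : ∃ u v, H.Adj u v)
    (n : ℕ) (hn : 0 < n) (r : ℕ) (hr : H.chromaticNumber = r) :
    n * (r - 1) + 1 ≤ IR H (StarGraph n) := by
  classical
  obtain ⟨u0, v0, huv0⟩ := hedge
  have hk : 0 < k := u0.pos
  -- nonemptiness of the defining set
  have hne : {N : ℕ | ∃ F : SimpleGraph (Fin N), ArrowsInd F H (StarGraph n)}.Nonempty := by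
    set G' : SimpleGraph (Fin k × Fin (k * n)) := SimpleGraph.comap Prod.fst H with hG'
    have e0 : Fin (k * (k * n)) ≃ Fin k × Fin (k * n) :=
      (finProdFinEquiv (m := k) (n := k * n)).symm
    have iso := SimpleGraph.Iso.comap e0 G'
    exact ⟨k * (k * n), _, arrowsInd_iso iso.symm (blowup_arrows k n hk hn H)⟩
  refine le_csInf hne ?_
  intro N hN
  obtain ⟨F, hF⟩ := hN
  by_contra hlt
  push_neg at hlt
  have hNle : N ≤ n * (r - 1) := by omega
  let c : Sym2 (Fin N) → Bool :=
    Sym2.lift ⟨fun u v => decide (u.val / n ≠ v.val / n), fun u v => by simp [ne_comm]⟩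
  rcases hF c with ⟨f, hf⟩ | ⟨g, hg⟩
  · -- a red copy of H yields a proper (r-1)-coloring of H
    have hcol : H.Colorable (r - 1) := by
      refine ⟨SimpleGraph.Coloring.mk
        (fun u => ⟨(f u).val / n, ?_⟩) ?_⟩
      · have h1 : (f u).val < n * (r - 1) := lt_of_lt_of_le (f u).isLt hNle
        rw [Nat.div_lt_iff_lt_mul hn]
        have h2 := mul_comm n (r - 1)
        omega
      · intro u v hadj hcontra
        have := hf u v hadj
        simp only [c, Sym2.lift_mk, decide_eq_true_eq] at this
        exact this (congrArg Fin.val hcontra)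
    have hle : H.chromaticNumber ≤ (r - 1 : ℕ) := hcol.chromaticNumber_le
    rw [hr] at hle
    have hle' : r ≤ r - 1 := by exact_mod_cast hle
    have hr0 : r = 0 := by omega
    subst hr0
    have hN0 : N = 0 := by omega
    subst hN0
    exact (f u0).elim0
  · -- a blue star yields n+1 vertices in one block of size ≤ n
    set b := (g (Sum.inl 0)).val / n with hb
    have hblock : ∀ x : Fin 1 ⊕ Fin n, (g x).val / n = b := by
      rintro (x | x)
      · rw [Subsingleton.elim x 0]
      · have hadj : (StarGraph n).Adj (Sum.inl 0) (Sum.inr x) := by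
          simp [StarGraph]
        have := hg _ _ hadj
        simp only [c, Sym2.lift_mk, decide_eq_false_iff_not, not_not] at this
        exact this.symm
    set blk := Finset.univ.filter (fun i : Fin N => i.val / n = b) with hblk
    have h1 : (Finset.univ : Finset (Fin 1 ⊕ Fin n)).card ≤ blk.card := by
      refine Finset.card_le_card_of_injOn (fun x => g x) ?_ (g.injective.injOn)
      intro x _
      exact Finset.mem_filter.mpr ⟨Finset.mem_univ _, hblock x⟩
    have h2 : blk.card ≤ n := by
      have : blk.card ≤ (Finset.univ : Finset (Fin n)).card := by
        refine Finset.card_le_card_of_injOn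
          (fun i => (⟨i.val % n, Nat.mod_lt _ hn⟩ : Fin n)) (fun _ _ => Finset.mem_univ _) ?_
        intro i hi j hj hij
        have hdi : i.val / n = b := (Finset.mem_filter.mp hi).2
        have hdj : j.val / n = b := (Finset.mem_filter.mp hj).2
        have hmod : i.val % n = j.val % n := congrArg Fin.val hij
        have h1 := Nat.div_add_mod i.val n
        have h2 := Nat.div_add_mod j.val n
        have h3 : n * (i.val / n) = n * (j.val / n) := by rw [hdi, hdj]
        exact Fin.ext (by omega)
      simpa using this
    have h3 : (Finset.univ : Finset (Fin 1 ⊕ Fin n)).card = n + 1 := by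
      simp [Fintype.card_sum]
      omega
    omega
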